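/- For every integer ℓ ≥ 9 there exist x₁, x₂, x₃, x₄ ∈ Sym(ℓ) such that x₁·x₂·x₃·x₄ = 1, the subgroup generated by x₁, x₂, x₃, x₄ contains Alt(ℓ), x₁ and x₂ are ℓ-cycles, and x₃ and x₄ are transpositions. -/

import Mathlib

/-- **Lemma 9.2, case I1A.2**: for every `ℓ ≥ 9` there is a product-one quadruple
`x₁·x₂·x₃·x₄ = 1` in `Sym(ℓ)` generating a subgroup containing `Alt(ℓ)`, where
`x₁, x₂` are `ℓ`-cycles and `x₃, x₄` are transpositions. -/
theorem statement12 (ℓ : ℕ) (hℓ : 9 ≤ ℓ) :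
    ∃ x₁ x₂ x₃ x₄ : Equiv.Perm (Fin ℓ),
      x₁ * x₂ * x₃ * x₄ = 1 ∧
      alternatingGroup (Fin ℓ) ≤ Subgroup.closure {x₁, x₂, x₃, x₄} ∧
      x₁.cycleType = {ℓ} ∧ x₂.cycleType = {ℓ} ∧
      x₃.cycleType = {2} ∧ x₄.cycleType = {2} := by
  have h2 : 2 ≤ ℓ := by omega
  have hlt : 0 < ℓ := by omega
  set σ : Equiv.Perm (Fin ℓ) := finRotate ℓ with hσ
  have hsupp : σ.support = Finset.univ := support_finRotate_of_le h2
  have hcyc : σ.IsCycle := isCycle_finRotate_of_le h2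
  have hx : σ (⟨0, hlt⟩ : Fin ℓ) ≠ ⟨0, hlt⟩ := by
    have : (⟨0, hlt⟩ : Fin ℓ) ∈ σ.support := by rw [hsupp]; exact Finset.mem_univ _
    exact Equiv.Perm.mem_support.mp this
  set s : Equiv.Perm (Fin ℓ) := Equiv.swap ⟨0, hlt⟩ (σ ⟨0, hlt⟩) with hs
  refine ⟨σ, σ⁻¹, s, s, ?_, ?_, ?_, ?_, ?_, ?_⟩
  · rw [mul_inv_cancel, one_mul, hs, Equiv.swap_mul_self]
  · have htop : Subgroup.closure {σ, s} = ⊤ :=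
      Equiv.Perm.closure_cycle_adjacent_swap hcyc hsupp _
    have hle : Subgroup.closure {σ, s} ≤ Subgroup.closure {σ, σ⁻¹, s, s} := by
      apply Subgroup.closure_mono
      intro x hx
      rcases hx with h | h
      · exact Or.inl h
      · exact Or.inr (Or.inr (Or.inl h))
    calc alternatingGroup (Fin ℓ) ≤ ⊤ := le_top
      _ = Subgroup.closure {σ, s} := htop.symm
      _ ≤ _ := hle
  · exact cycleType_finRotate_of_le h2
  · rw [Equiv.Perm.cycleType_inv]; exact cycleType_finRotate_of_le h2
  all_goals
    rw [hs, (Equiv.Perm.isCycle_swap hx.symm).cycleType,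
      Equiv.Perm.card_support_swap hx.symm]
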